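/- In a peculiar (claw, co-diamond, K_4)-free graph, each set S_{x,y} contains neither a triangle nor a stable set of size 3; consequently |S_{x,y}| ≤ 5 and the whole graph has at most 18 vertices. -/

import Mathlib

lemma ramsey5 {V : Type*} [DecidableEq V] (G : SimpleGraph V) [DecidableRel G.Adj]
    (s : Finset V)
    (h : ∀ u ∈ s, ∀ v ∈ s, ∀ w ∈ s, u ≠ v → u ≠ w → v ≠ w →
      ¬ (G.Adj u v ∧ G.Adj u w ∧ G.Adj v w) ∧
      ¬ (¬ G.Adj u v ∧ ¬ G.Adj u w ∧ ¬ G.Adj v w)) :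
    s.card ≤ 5 := by
  by_contra hc
  push_neg at hc
  obtain ⟨u, hu⟩ := Finset.card_pos.mp (show 0 < s.card by omega)
  set s' := s.erase u with hs'
  have hs'c : 5 ≤ s'.card := by
    have h : s'.card = s.card - 1 := Finset.card_erase_of_mem hu
    omega
  set N := s'.filter (fun v => G.Adj u v) with hN
  set M := s'.filter (fun v => ¬ G.Adj u v) with hM
  have hNM : N.card + M.card = s'.card := Finset.card_filter_add_card_filter_not _
  rcases le_or_gt 3 N.card with h3 | h3'
  · obtain ⟨t, hsub, ht⟩ := Finset.exists_subset_card_eq h3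
    obtain ⟨v, w, z, hvw, hvz, hwz, rfl⟩ := Finset.card_eq_three.mp ht
    have hv : v ∈ N := hsub (by simp)
    have hw : w ∈ N := hsub (by simp)
    have hz : z ∈ N := hsub (by simp)
    simp only [hN, Finset.mem_filter, hs', Finset.mem_erase] at hv hw hz
    obtain ⟨⟨hvu, hvs⟩, hva⟩ := hv
    obtain ⟨⟨hwu, hws⟩, hwa⟩ := hw
    obtain ⟨⟨hzu, hzs⟩, hza⟩ := hz
    rcases Decidable.em (G.Adj v w) with e | e
    · exact (h u hu v hvs w hws (Ne.symm hvu) (Ne.symm hwu) hvw).1 ⟨hva, hwa, e⟩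
    rcases Decidable.em (G.Adj v z) with e2 | e2
    · exact (h u hu v hvs z hzs (Ne.symm hvu) (Ne.symm hzu) hvz).1 ⟨hva, hza, e2⟩
    rcases Decidable.em (G.Adj w z) with e3 | e3
    · exact (h u hu w hws z hzs (Ne.symm hwu) (Ne.symm hzu) hwz).1 ⟨hwa, hza, e3⟩
    exact (h v hvs w hws z hzs hvw hvz hwz).2 ⟨e, e2, e3⟩
  · have h3 : 3 ≤ M.card := by omega
    obtain ⟨t, hsub, ht⟩ := Finset.exists_subset_card_eq h3
    obtain ⟨v, w, z, hvw, hvz, hwz, rfl⟩ := Finset.card_eq_three.mp ht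
    have hv : v ∈ M := hsub (by simp)
    have hw : w ∈ M := hsub (by simp)
    have hz : z ∈ M := hsub (by simp)
    simp only [hM, Finset.mem_filter, hs', Finset.mem_erase] at hv hw hz
    obtain ⟨⟨hvu, hvs⟩, hva⟩ := hv
    obtain ⟨⟨hwu, hws⟩, hwa⟩ := hw
    obtain ⟨⟨hzu, hzs⟩, hza⟩ := hz
    rcases Decidable.em (G.Adj v w) with e | e
    · rcases Decidable.em (G.Adj v z) with e2 | e2
      · rcases Decidable.em (G.Adj w z) with e3 | e3
        · exact (h v hvs w hws z hzs hvw hvz hwz).1 ⟨e, e2, e3⟩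
        · exact (h u hu w hws z hzs (Ne.symm hwu) (Ne.symm hzu) hwz).2 ⟨hwa, hza, e3⟩
      · exact (h u hu v hvs z hzs (Ne.symm hvu) (Ne.symm hzu) hvz).2 ⟨hva, hza, e2⟩
    · exact (h u hu v hvs w hws (Ne.symm hvu) (Ne.symm hwu) hvw).2 ⟨hva, hwa, e⟩

/-- In a peculiar (claw, co-diamond, K₄)-free graph, each set `S_{x,y}`
contains neither a triangle nor a stable set of size 3, hence has at most 5
vertices, and the whole graph has at most 18 vertices. -/
theorem stmt_14 {V : Type*} [Fintype V] [DecidableEq V]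
    (G : SimpleGraph V) [DecidableRel G.Adj]
    (hconn : G.Connected)
    (hclaw : ¬ ∃ v x y z : V, x ≠ y ∧ x ≠ z ∧ y ≠ z ∧
      G.Adj v x ∧ G.Adj v y ∧ G.Adj v z ∧ ¬ G.Adj x y ∧ ¬ G.Adj x z ∧ ¬ G.Adj y z)
    (hcd : ¬ ∃ w x y z : V, w ≠ x ∧ w ≠ y ∧ w ≠ z ∧ x ≠ y ∧ x ≠ z ∧ y ≠ z ∧
      G.Adj w x ∧ ¬ G.Adj w y ∧ ¬ G.Adj w z ∧ ¬ G.Adj x y ∧ ¬ G.Adj x z ∧ ¬ G.Adj y z)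
    (a b c : V) (hab : a ≠ b) (hac : a ≠ c) (hbc : b ≠ c)
    (hnab : ¬ G.Adj a b) (hnac : ¬ G.Adj a c) (hnbc : ¬ G.Adj b c)
    (htwo : ∀ v : V, v ∉ ({a, b, c} : Set V) →
      ((G.Adj v a ∧ G.Adj v b ∧ ¬ G.Adj v c) ∨
       (G.Adj v a ∧ ¬ G.Adj v b ∧ G.Adj v c) ∨
       (¬ G.Adj v a ∧ G.Adj v b ∧ G.Adj v c)))
    (hK4 : G.CliqueFree 4) :
    (∀ x y : V, x ∈ ({a, b, c} : Set V) → y ∈ ({a, b, c} : Set V) → x ≠ y →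
      (∀ u v w : V,
        (u ∉ ({a, b, c} : Set V) ∧ G.Adj u x ∧ G.Adj u y) →
        (v ∉ ({a, b, c} : Set V) ∧ G.Adj v x ∧ G.Adj v y) →
        (w ∉ ({a, b, c} : Set V) ∧ G.Adj w x ∧ G.Adj w y) →
        u ≠ v → u ≠ w → v ≠ w →
        ¬ (G.Adj u v ∧ G.Adj u w ∧ G.Adj v w) ∧
        ¬ (¬ G.Adj u v ∧ ¬ G.Adj u w ∧ ¬ G.Adj v w)) ∧
      (Finset.univ.filter
        (fun u => u ∉ ({a, b, c} : Finset V) ∧ G.Adj u x ∧ G.Adj u y)).card ≤ 5) ∧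
    Fintype.card V ≤ 18 := by
  have main : ∀ x y : V, x ∈ ({a, b, c} : Set V) → y ∈ ({a, b, c} : Set V) → x ≠ y →
      (∀ u v w : V,
        (u ∉ ({a, b, c} : Set V) ∧ G.Adj u x ∧ G.Adj u y) →
        (v ∉ ({a, b, c} : Set V) ∧ G.Adj v x ∧ G.Adj v y) →
        (w ∉ ({a, b, c} : Set V) ∧ G.Adj w x ∧ G.Adj w y) →
        u ≠ v → u ≠ w → v ≠ w →
        ¬ (G.Adj u v ∧ G.Adj u w ∧ G.Adj v w) ∧
        ¬ (¬ G.Adj u v ∧ ¬ G.Adj u w ∧ ¬ G.Adj v w)) := by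
    intro x y hx hy hxy u v w hu hv hw huv huw hvw
    have hxu : x ≠ u := fun h => hu.1 (h ▸ hx)
    have hxv : x ≠ v := fun h => hv.1 (h ▸ hx)
    have hxw : x ≠ w := fun h => hw.1 (h ▸ hx)
    constructor
    · rintro ⟨e1, e2, e3⟩
      have h3 : G.IsNClique 3 ({u, v, w} : Finset V) := by
        rw [SimpleGraph.is3Clique_triple_iff]
        exact ⟨e1, e2, e3⟩
      have h4 : G.IsNClique 4 (insert x ({u, v, w} : Finset V)) := by
        refine h3.insert ?_
        intro t ht
        simp only [Finset.mem_insert, Finset.mem_singleton] at ht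
        rcases ht with rfl | rfl | rfl
        · exact hu.2.1.symm
        · exact hv.2.1.symm
        · exact hw.2.1.symm
      exact hK4 _ h4
    · rintro ⟨e1, e2, e3⟩
      exact hclaw ⟨x, u, v, w, huv, huw, hvw,
        hu.2.1.symm, hv.2.1.symm, hw.2.1.symm, e1, e2, e3⟩
  have card5 : ∀ x y : V, x ∈ ({a, b, c} : Set V) → y ∈ ({a, b, c} : Set V) → x ≠ y →
      (Finset.univ.filter
        (fun u => u ∉ ({a, b, c} : Finset V) ∧ G.Adj u x ∧ G.Adj u y)).card ≤ 5 := by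
    intro x y hx hy hxy
    apply ramsey5 G
    intro u hu v hv w hw huv huw hvw
    simp only [Finset.mem_filter, Finset.mem_univ, true_and] at hu hv hw
    have conv : ∀ z : V, z ∉ ({a, b, c} : Finset V) → z ∉ ({a, b, c} : Set V) := by
      intro z hz hm
      simp only [Set.mem_insert_iff, Set.mem_singleton_iff] at hm
      exact hz (by simp only [Finset.mem_insert, Finset.mem_singleton]; exact hm)
    exact main x y hx hy hxy u v w ⟨conv u hu.1, hu.2⟩ ⟨conv v hv.1, hv.2⟩
      ⟨conv w hw.1, hw.2⟩ huv huw hvw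
  refine ⟨fun x y hx hy hxy => ⟨main x y hx hy hxy, card5 x y hx hy hxy⟩, ?_⟩
  set Tab := Finset.univ.filter
    (fun u => u ∉ ({a, b, c} : Finset V) ∧ G.Adj u a ∧ G.Adj u b) with hTab
  set Tac := Finset.univ.filter
    (fun u => u ∉ ({a, b, c} : Finset V) ∧ G.Adj u a ∧ G.Adj u c) with hTac
  set Tbc := Finset.univ.filter
    (fun u => u ∉ ({a, b, c} : Finset V) ∧ G.Adj u b ∧ G.Adj u c) with hTbc
  have hsub : (Finset.univ : Finset V) ⊆ ({a, b, c} : Finset V) ∪ Tab ∪ Tac ∪ Tbc := by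
    intro v _
    rw [Finset.mem_union, Finset.mem_union, Finset.mem_union]
    by_cases hv : v ∈ ({a, b, c} : Finset V)
    · exact Or.inl (Or.inl (Or.inl hv))
    · have hv' : v ∉ ({a, b, c} : Set V) := by
        intro hm
        simp only [Set.mem_insert_iff, Set.mem_singleton_iff] at hm
        exact hv (by simp only [Finset.mem_insert, Finset.mem_singleton]; exact hm)
      rcases htwo v hv' with ⟨h1, h2, _⟩ | ⟨h1, _, h2⟩ | ⟨_, h1, h2⟩
      · exact Or.inl (Or.inl (Or.inr (Finset.mem_filter.mpr ⟨Finset.mem_univ _, hv, h1, h2⟩)))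
      · exact Or.inl (Or.inr (Finset.mem_filter.mpr ⟨Finset.mem_univ _, hv, h1, h2⟩))
      · exact Or.inr (Finset.mem_filter.mpr ⟨Finset.mem_univ _, hv, h1, h2⟩)
  have h1 : Tab.card ≤ 5 := card5 a b (by simp) (by simp) hab
  have h2 : Tac.card ≤ 5 := card5 a c (by simp) (by simp) hac
  have h3 : Tbc.card ≤ 5 := card5 b c (by simp) (by simp) hbc
  have habc : ({a, b, c} : Finset V).card ≤ 3 := by
    apply le_trans (Finset.card_insert_le _ _)
    have := Finset.card_insert_le b ({c} : Finset V)
    simp at this ⊢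
    omega
  calc Fintype.card V = (Finset.univ : Finset V).card := rfl
    _ ≤ (({a, b, c} : Finset V) ∪ Tab ∪ Tac ∪ Tbc).card := Finset.card_le_card hsub
    _ ≤ (({a, b, c} : Finset V) ∪ Tab ∪ Tac).card + Tbc.card := Finset.card_union_le _ _
    _ ≤ (({a, b, c} : Finset V) ∪ Tab).card + Tac.card + Tbc.card := by
        have := Finset.card_union_le (({a, b, c} : Finset V) ∪ Tab) Tac; omega
    _ ≤ ({a, b, c} : Finset V).card + Tab.card + Tac.card + Tbc.card := by
        have := Finset.card_union_le ({a, b, c} : Finset V) Tab; omega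
    _ ≤ 18 := by omega
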